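/- Let μ be a real number with μ > 0 and μ ≠ 1, let r > 0, and let f₁, f₂, g₁, g₂ be holomorphic on the ball B(0, r) ⊆ ℂ with f₁(0) = f₂(0) = g₁(0) = g₂(0) = 1 and f₂′(0) = g₂′(0) = 0. Set k = (μ−1)/(μ+1) and Z = ((μ²−1)/(4μ))·f₁′(0). For z ∈ B(0, r), z ≠ 0, define ζ(z) = ((μ²−1)/(4μz))·(f₁(z)·conj(f₂(z)) + g₁(z)·conj(g₂(z))·|z|^{2μ})/(|f₂(z)|² + k²·|g₂(z)|²·|z|^{2μ}) and ζ̃(z) = ((μ²−1)/(4μz))·(1 + |z|^{2μ})/(1 + k²·|z|^{2μ}), where |z|^{2μ} denotes the real power (|z|²)^μ. Then ζ(z) − ζ̃(z) tends to Z as z tends to 0 (through nonzero values). -/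

import Mathlib

open Complex Filter Asymptotics Topology

private lemma bryant_frac_aux (a b z D1 Q N P Num : ℂ) (hb : b ≠ 0) (hz : z ≠ 0)
    (hD : D1 ≠ 0) (hQ : Q ≠ 0) (h : N * Q - P * D1 = Num) :
    a / (b * z) * N / D1 - a / (b * z) * P / Q = a / b * (Num / z) / (D1 * Q) := by
  subst h
  field_simp

set_option maxHeartbeats 1600000 in
theorem stmt16 (μ : ℝ) (hμ : 0 < μ) (hμ1 : μ ≠ 1) (r : ℝ) (hr : 0 < r)
    (f₁ f₂ g₁ g₂ : ℂ → ℂ)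
    (hf₁ : DifferentiableOn ℂ f₁ (Metric.ball 0 r))
    (hf₂ : DifferentiableOn ℂ f₂ (Metric.ball 0 r))
    (hg₁ : DifferentiableOn ℂ g₁ (Metric.ball 0 r))
    (hg₂ : DifferentiableOn ℂ g₂ (Metric.ball 0 r))
    (hf₁0 : f₁ 0 = 1) (hf₂0 : f₂ 0 = 1) (hg₁0 : g₁ 0 = 1) (hg₂0 : g₂ 0 = 1)
    (hf₂' : deriv f₂ 0 = 0) (hg₂' : deriv g₂ 0 = 0)
    (k : ℝ) (hk : k = (μ - 1) / (μ + 1))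
    (Z : ℂ) (hZ : Z = (((μ : ℂ) ^ 2 - 1) / (4 * (μ : ℂ))) * deriv f₁ 0)
    (ζ ζt : ℂ → ℂ)
    (hζ : ∀ z : ℂ, z ≠ 0 → ζ z =
      (((μ : ℂ) ^ 2 - 1) / (4 * (μ : ℂ) * z)) *
        (f₁ z * (starRingEnd ℂ) (f₂ z) +
          g₁ z * (starRingEnd ℂ) (g₂ z) * (((‖z‖ ^ 2) ^ μ : ℝ) : ℂ)) /
        (((‖f₂ z‖) ^ 2 +
          k ^ 2 * (‖g₂ z‖) ^ 2 * (‖z‖ ^ 2) ^ μ : ℝ) : ℂ))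
    (hζt : ∀ z : ℂ, z ≠ 0 → ζt z =
      (((μ : ℂ) ^ 2 - 1) / (4 * (μ : ℂ) * z)) *
        (((1 + (‖z‖ ^ 2) ^ μ : ℝ)) : ℂ) /
        (((1 + k ^ 2 * (‖z‖ ^ 2) ^ μ : ℝ)) : ℂ)) :
    Filter.Tendsto (fun z : ℂ => ζ z - ζt z) (nhdsWithin 0 {(0 : ℂ)}ᶜ) (nhds Z) := by
  have hballn : Metric.ball (0:ℂ) r ∈ 𝓝 (0:ℂ) := Metric.ball_mem_nhds 0 hr
  have hf₁d : DifferentiableAt ℂ f₁ 0 := hf₁.differentiableAt hballn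
  have hf₂d : DifferentiableAt ℂ f₂ 0 := hf₂.differentiableAt hballn
  have hg₁d : DifferentiableAt ℂ g₁ 0 := hg₁.differentiableAt hballn
  have hg₂d : DifferentiableAt ℂ g₂ 0 := hg₂.differentiableAt hballn
  set ρ : ℂ → ℝ := fun z => (‖z‖ ^ 2) ^ μ with hρdef
  -- ρ → 0
  have hρ0 : Tendsto ρ (𝓝 0) (𝓝 0) := by
    have h1 : Tendsto (fun z : ℂ => ‖z‖ ^ 2) (𝓝 0) (𝓝 0) := by
      have hc : Continuous fun z : ℂ => ‖z‖ ^ 2 := continuous_norm.pow 2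
      simpa using hc.tendsto 0
    have h2 : Tendsto (fun x : ℝ => x ^ μ) (𝓝 0) (𝓝 0) := by
      have hc : ContinuousAt (fun x : ℝ => x ^ μ) 0 :=
        Real.continuousAt_rpow_const 0 μ (Or.inr hμ.le)
      simpa [Real.zero_rpow hμ.ne'] using hc.tendsto
    exact h2.comp h1
  have hρnn : ∀ z : ℂ, 0 ≤ ρ z := fun z => Real.rpow_nonneg (by positivity) μ
  have hρC : Tendsto (fun z : ℂ => ((ρ z : ℝ) : ℂ)) (𝓝[≠] 0) (𝓝 0) := by
    have := (Complex.continuous_ofReal.tendsto 0).comp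
      (hρ0.mono_left (nhdsWithin_le_nhds : 𝓝[≠] (0:ℂ) ≤ 𝓝 0))
    simpa [Function.comp_def] using this
  -- slopes
  have slope1 : Tendsto (fun z : ℂ => (f₁ z - 1) / z) (𝓝[≠] 0) (𝓝 (deriv f₁ 0)) := by
    have h := hf₁d.hasDerivAt
    rw [hasDerivAt_iff_tendsto_slope] at h
    simpa [slope_fun_def_field, hf₁0] using h
  have slope2 : Tendsto (fun z : ℂ => (f₂ z - 1) / z) (𝓝[≠] 0) (𝓝 0) := by
    have h := hf₂d.hasDerivAt
    rw [hasDerivAt_iff_tendsto_slope, hf₂'] at h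
    simpa [slope_fun_def_field, hf₂0] using h
  have slopeg1 : Tendsto (fun z : ℂ => (g₁ z - 1) / z) (𝓝[≠] 0) (𝓝 (deriv g₁ 0)) := by
    have h := hg₁d.hasDerivAt
    rw [hasDerivAt_iff_tendsto_slope] at h
    simpa [slope_fun_def_field, hg₁0] using h
  have slopeg2 : Tendsto (fun z : ℂ => (g₂ z - 1) / z) (𝓝[≠] 0) (𝓝 0) := by
    have h := hg₂d.hasDerivAt
    rw [hasDerivAt_iff_tendsto_slope, hg₂'] at h
    simpa [slope_fun_def_field, hg₂0] using h
  have hslopef : Tendsto (fun z : ℂ => (f₁ z - f₂ z) / z) (𝓝[≠] 0) (𝓝 (deriv f₁ 0)) := by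
    refine Tendsto.congr (fun z => ?_) (by simpa using slope1.sub slope2)
    rw [div_sub_div_same]; ring_nf
  have hslopeg : Tendsto (fun z : ℂ => (g₁ z - g₂ z) / z) (𝓝[≠] 0) (𝓝 (deriv g₁ 0)) := by
    refine Tendsto.congr (fun z => ?_) (by simpa using slopeg1.sub slopeg2)
    rw [div_sub_div_same]; ring_nf
  -- conjugate continuity
  have hcf₂cont : Tendsto (fun z : ℂ => (starRingEnd ℂ) (f₂ z)) (𝓝[≠] 0) (𝓝 1) := by
    have h := (continuous_conj.tendsto (f₂ 0)).comp hf₂d.continuousAt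
    rw [hf₂0] at h
    simpa [Function.comp_def] using h.mono_left nhdsWithin_le_nhds
  have hcg₂cont : Tendsto (fun z : ℂ => (starRingEnd ℂ) (g₂ z)) (𝓝[≠] 0) (𝓝 1) := by
    have h := (continuous_conj.tendsto (g₂ 0)).comp hg₂d.continuousAt
    rw [hg₂0] at h
    simpa [Function.comp_def] using h.mono_left nhdsWithin_le_nhds
  -- real differentiability
  have hconjD : Differentiable ℝ (fun z : ℂ => (starRingEnd ℂ) z) :=
    Complex.conjCLE.differentiable
  have hf₂r : DifferentiableAt ℝ f₂ 0 := hf₂d.restrictScalars ℝ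
  have hg₂r : DifferentiableAt ℝ g₂ 0 := hg₂d.restrictScalars ℝ
  have hf₁r : DifferentiableAt ℝ f₁ 0 := hf₁d.restrictScalars ℝ
  have hg₁r : DifferentiableAt ℝ g₁ 0 := hg₁d.restrictScalars ℝ
  have hcf₂r : DifferentiableAt ℝ (fun z => (starRingEnd ℂ) (f₂ z)) 0 :=
    (hconjD (f₂ 0)).comp 0 hf₂r
  have hcg₂r : DifferentiableAt ℝ (fun z => (starRingEnd ℂ) (g₂ z)) 0 :=
    (hconjD (g₂ 0)).comp 0 hg₂r
  -- big-O estimates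
  have hO2 : (fun z : ℂ => g₁ z * (starRingEnd ℂ) (g₂ z) - f₂ z * (starRingEnd ℂ) (f₂ z))
      =O[𝓝 0] fun z : ℂ => z := by
    have hd : DifferentiableAt ℝ
        (fun z : ℂ => g₁ z * (starRingEnd ℂ) (g₂ z) - f₂ z * (starRingEnd ℂ) (f₂ z)) 0 :=
      (hg₁r.mul hcg₂r).sub (hf₂r.mul hcf₂r)
    have h := hd.isBigO_sub
    simpa [hg₁0, hg₂0, hf₂0, map_one] using h
  have hO3 : (fun z : ℂ => f₁ z * (starRingEnd ℂ) (f₂ z) - g₂ z * (starRingEnd ℂ) (g₂ z))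
      =O[𝓝 0] fun z : ℂ => z := by
    have hd : DifferentiableAt ℝ
        (fun z : ℂ => f₁ z * (starRingEnd ℂ) (f₂ z) - g₂ z * (starRingEnd ℂ) (g₂ z)) 0 :=
      (hf₁r.mul hcf₂r).sub (hg₂r.mul hcg₂r)
    have h := hd.isBigO_sub
    simpa [hf₁0, hf₂0, hg₂0, map_one] using h
  -- generic vanishing term
  have key : ∀ h : ℂ → ℂ, (h =O[𝓝 0] fun z : ℂ => z) →
      Tendsto (fun z : ℂ => ((ρ z : ℝ) : ℂ) * h z / z) (𝓝[≠] 0) (𝓝 0) := by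
    intro h hO
    rcases hO.isBigOWith with ⟨C, hC⟩
    have hb : ∀ᶠ z : ℂ in 𝓝[≠] 0, ‖((ρ z : ℝ) : ℂ) * h z / z‖ ≤ C * ρ z := by
      filter_upwards [self_mem_nhdsWithin, nhdsWithin_le_nhds hC.bound] with z hz hbz
      have hz0 : z ≠ 0 := by simpa using hz
      have hzpos : (0:ℝ) < ‖z‖ := by simpa [norm_pos_iff] using hz0
      rw [norm_div, norm_mul, Complex.norm_real, Real.norm_of_nonneg (hρnn z),
        div_le_iff₀ hzpos]
      have hbz' : ‖h z‖ ≤ C * ‖z‖ := by simpa using hbz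
      nlinarith [hρnn z, norm_nonneg (h z), norm_nonneg z]
    have hg : Tendsto (fun z : ℂ => C * ρ z) (𝓝[≠] 0) (𝓝 0) := by
      have := (hρ0.mono_left (nhdsWithin_le_nhds : 𝓝[≠] (0:ℂ) ≤ 𝓝 0)).const_mul C
      simpa using this
    exact squeeze_zero_norm' hb hg
  have term2 := key _ hO2
  have term3' := key _ hO3
  have term1 : Tendsto (fun z : ℂ => (starRingEnd ℂ) (f₂ z) * ((f₁ z - f₂ z) / z)) (𝓝[≠] 0)
      (𝓝 (deriv f₁ 0)) := by
    simpa using hcf₂cont.mul hslopef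
  have term3 : Tendsto (fun z : ℂ => (k:ℂ)^2 * (((ρ z : ℝ) : ℂ) *
      (f₁ z * (starRingEnd ℂ) (f₂ z) - g₂ z * (starRingEnd ℂ) (g₂ z)) / z)) (𝓝[≠] 0) (𝓝 0) := by
    simpa using term3'.const_mul ((k:ℂ)^2)
  have term4 : Tendsto (fun z : ℂ => (k:ℂ)^2 * ((ρ z : ℝ) : ℂ)^2 *
      ((starRingEnd ℂ) (g₂ z) * ((g₁ z - g₂ z) / z))) (𝓝[≠] 0) (𝓝 0) := by
    have h : Tendsto (fun z : ℂ => ((k:ℂ)^2 * (((ρ z : ℝ) : ℂ) * ((ρ z : ℝ) : ℂ))) *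
        ((starRingEnd ℂ) (g₂ z) * ((g₁ z - g₂ z) / z))) (𝓝[≠] 0) (𝓝 0) := by
      have h0 := ((tendsto_const_nhds (x := ((k:ℂ)^2)) (f := 𝓝[≠] (0:ℂ))).mul
        (hρC.mul hρC)).mul (hcg₂cont.mul hslopeg)
      simpa using h0
    exact h.congr (fun z => by ring)
  -- numerator over z
  have hG : Tendsto (fun z : ℂ =>
      ((starRingEnd ℂ) (f₂ z) * (f₁ z - f₂ z)
        + ((ρ z : ℝ) : ℂ) * (g₁ z * (starRingEnd ℂ) (g₂ z) - f₂ z * (starRingEnd ℂ) (f₂ z))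
        + (k:ℂ)^2 * ((ρ z : ℝ) : ℂ) *
            (f₁ z * (starRingEnd ℂ) (f₂ z) - g₂ z * (starRingEnd ℂ) (g₂ z))
        + (k:ℂ)^2 * ((ρ z : ℝ) : ℂ)^2 *
            ((starRingEnd ℂ) (g₂ z) * (g₁ z - g₂ z))) / z) (𝓝[≠] 0) (𝓝 (deriv f₁ 0)) := by
    have h : Tendsto (fun z : ℂ =>
        (starRingEnd ℂ) (f₂ z) * ((f₁ z - f₂ z) / z)
        + ((ρ z : ℝ) : ℂ) * (g₁ z * (starRingEnd ℂ) (g₂ z) - f₂ z * (starRingEnd ℂ) (f₂ z)) / z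
        + (k:ℂ)^2 * (((ρ z : ℝ) : ℂ) *
            (f₁ z * (starRingEnd ℂ) (f₂ z) - g₂ z * (starRingEnd ℂ) (g₂ z)) / z)
        + (k:ℂ)^2 * ((ρ z : ℝ) : ℂ)^2 *
            ((starRingEnd ℂ) (g₂ z) * ((g₁ z - g₂ z) / z))) (𝓝[≠] 0) (𝓝 (deriv f₁ 0)) := by
      have h0 := ((term1.add term2).add term3).add term4
      simpa using h0
    exact h.congr (fun z => by ring)
  -- denominator
  have hDreal : Tendsto (fun z : ℂ =>
      (‖f₂ z‖) ^ 2 + k ^ 2 * (‖g₂ z‖) ^ 2 * ρ z) (𝓝 0) (𝓝 1) := by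
    have hf : Tendsto (fun z : ℂ => (‖f₂ z‖) ^ 2) (𝓝 0) (𝓝 1) := by
      have h := (continuous_norm.tendsto (f₂ 0)).comp hf₂d.continuousAt
      rw [hf₂0] at h
      simpa using h.pow 2
    have hg : Tendsto (fun z : ℂ => (‖g₂ z‖) ^ 2) (𝓝 0) (𝓝 1) := by
      have h := (continuous_norm.tendsto (g₂ 0)).comp hg₂d.continuousAt
      rw [hg₂0] at h
      simpa using h.pow 2
    have h := hf.add (((tendsto_const_nhds (x := k^2)).mul hg).mul hρ0)
    simpa using h
  have hDen : Tendsto (fun z : ℂ =>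
      (((‖f₂ z‖) ^ 2 + k ^ 2 * (‖g₂ z‖) ^ 2 * ρ z : ℝ) : ℂ) *
        (1 + (k:ℂ)^2 * ((ρ z : ℝ) : ℂ))) (𝓝[≠] 0) (𝓝 1) := by
    have h1 : Tendsto (fun z : ℂ =>
        (((‖f₂ z‖) ^ 2 + k ^ 2 * (‖g₂ z‖) ^ 2 * ρ z : ℝ) : ℂ))
        (𝓝[≠] 0) (𝓝 1) := by
      have := (Complex.continuous_ofReal.tendsto 1).comp
        (hDreal.mono_left (nhdsWithin_le_nhds : 𝓝[≠] (0:ℂ) ≤ 𝓝 0))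
      simpa [Function.comp_def] using this
    have h2 : Tendsto (fun z : ℂ => (1 : ℂ) + (k:ℂ)^2 * ((ρ z : ℝ) : ℂ)) (𝓝[≠] 0) (𝓝 1) := by
      have := (tendsto_const_nhds (x := (1:ℂ))).add (hρC.const_mul ((k:ℂ)^2))
      simpa using this
    simpa using h1.mul h2
  -- the comparison function
  set F : ℂ → ℂ := fun z =>
    (((μ : ℂ) ^ 2 - 1) / (4 * (μ : ℂ))) *
      (((starRingEnd ℂ) (f₂ z) * (f₁ z - f₂ z)
        + ((ρ z : ℝ) : ℂ) * (g₁ z * (starRingEnd ℂ) (g₂ z) - f₂ z * (starRingEnd ℂ) (f₂ z))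
        + (k:ℂ)^2 * ((ρ z : ℝ) : ℂ) *
            (f₁ z * (starRingEnd ℂ) (f₂ z) - g₂ z * (starRingEnd ℂ) (g₂ z))
        + (k:ℂ)^2 * ((ρ z : ℝ) : ℂ)^2 *
            ((starRingEnd ℂ) (g₂ z) * (g₁ z - g₂ z))) / z) /
      ((((‖f₂ z‖) ^ 2 + k ^ 2 * (‖g₂ z‖) ^ 2 * ρ z : ℝ) : ℂ) *
        (1 + (k:ℂ)^2 * ((ρ z : ℝ) : ℂ))) with hFdef
  have hF : Tendsto F (𝓝[≠] 0) (𝓝 Z) := by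
    have h := Filter.Tendsto.div
      ((tendsto_const_nhds (x := (((μ : ℂ) ^ 2 - 1) / (4 * (μ : ℂ))))
        (f := 𝓝[≠] (0:ℂ))).mul hG) hDen one_ne_zero
    rw [div_one] at h
    rw [hZ, hFdef]
    exact h
  -- eventual equality
  have hpos : ∀ᶠ z : ℂ in 𝓝[≠] 0,
      0 < (‖f₂ z‖) ^ 2 + k ^ 2 * (‖g₂ z‖) ^ 2 * ρ z :=
    nhdsWithin_le_nhds (hDreal.eventually (eventually_gt_nhds one_pos))
  have heq : (fun z : ℂ => ζ z - ζt z) =ᶠ[𝓝[≠] 0] F := by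
    filter_upwards [self_mem_nhdsWithin, hpos] with z hz hDpos
    have hz0 : z ≠ 0 := by simpa using hz
    have habs : ∀ w : ℂ, ((‖w‖ : ℝ) : ℂ) ^ 2 = w * (starRingEnd ℂ) w := by
      intro w
      rw [← Complex.ofReal_pow, Complex.sq_norm, Complex.mul_conj]
    have hμC : (μ : ℂ) ≠ 0 := by exact_mod_cast hμ.ne'
    have hDne : ((((‖f₂ z‖) ^ 2 +
        k ^ 2 * (‖g₂ z‖) ^ 2 * ρ z : ℝ)) : ℂ) ≠ 0 :=
      Complex.ofReal_ne_zero.mpr hDpos.ne'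
    have h1kpos : (0:ℝ) < 1 + k ^ 2 * ρ z := by nlinarith [hρnn z, sq_nonneg k]
    have h1kne : (((1 + k ^ 2 * ρ z : ℝ)) : ℂ) ≠ 0 := Complex.ofReal_ne_zero.mpr h1kpos.ne'
    rw [hζ z hz0, hζt z hz0, hFdef]
    simp only [hρdef]
    have hb : (4:ℂ) * (μ:ℂ) ≠ 0 := by simp [hμC]
    have hq : (((1 + k ^ 2 * (‖z‖ ^ 2) ^ μ : ℝ)) : ℂ)
        = 1 + (k:ℂ)^2 * (((‖z‖ ^ 2) ^ μ : ℝ) : ℂ) := by push_cast; ring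
    rw [← hq]
    refine bryant_frac_aux _ _ _ _ _ _ _ _ hb hz0 hDne h1kne ?_
    push_cast
    rw [habs (f₂ z), habs (g₂ z)]
    ring
  exact hF.congr' heq.symm
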